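/- arXiv:1409.8177 — 5 statements merged into one kernel-verified Lean document; each statement's English description precedes it below -/
import Mathlib

section
/- Let f : ℤ^n → ℤ^n be a map that is coordinate-wise ℤ≥0-linear, i.e., f(∑ᵢ mᵢεᵢeᵢ) = ∑ᵢ mᵢ f(εᵢeᵢ) for all mᵢ ∈ ℤ≥0 and εᵢ ∈ {1,-1}, and suppose f is triangularizable, i.e., there is an ordering r₁,…,rₙ of {1,…,n} such that f(ε e_{rᵢ}) + ε e_{rᵢ} lies in the span ℤe_{r_{i+1}} ⊕ ⋯ ⊕ ℤe_{rₙ} for all 1 ≤ i ≤ n and ε ∈ {1,-1}. Then f is bijective. -/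
/-- A coordinate-wise ℤ≥0-linear, triangularizable map f : ℤ^n → ℤ^n is bijective. -/
theorem stmt_0 (n : ℕ) (f : (Fin n → ℤ) → (Fin n → ℤ))
    (hlin : ∀ (m : Fin n → ℕ) (ε : Fin n → ℤ), (∀ i, ε i = 1 ∨ ε i = -1) →
      f (fun j => (m j : ℤ) * ε j) = ∑ i, (m i : ℤ) • f (ε i • (Pi.single i 1 : Fin n → ℤ)))
    (htri : ∃ r : Equiv.Perm (Fin n), ∀ (i : Fin n) (ε : ℤ), ε = 1 ∨ ε = -1 →
      ∀ j : Fin n, j ≤ i →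
        f (ε • (Pi.single (r i) 1 : Fin n → ℤ)) (r j) + (ε • (Pi.single (r i) 1 : Fin n → ℤ)) (r j) = 0) :
    Function.Bijective f := by
  classical
  obtain ⟨r, hr⟩ := htri
  set c : ℤ → Fin n → (Fin n → ℤ) :=
    fun v i => ((v.natAbs : ℤ) • f ((if 0 ≤ v then (1:ℤ) else -1) • Pi.single i 1)) with hc
  have habs : ∀ w : ℤ, (w.natAbs : ℤ) * (if 0 ≤ w then (1:ℤ) else -1) = w := by
    intro w; split <;> omega
  -- decomposition lemma
  have hdec : ∀ x : Fin n → ℤ, f x = ∑ i, c (x i) i := by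
    intro x
    have h := hlin (fun i => (x i).natAbs) (fun i => if 0 ≤ x i then 1 else -1)
      (fun i => by by_cases h : 0 ≤ x i <;> simp [h])
    have hx : (fun j => (((x j).natAbs : ℤ)) * (if 0 ≤ x j then (1:ℤ) else -1)) = x := by
      funext j; exact habs (x j)
    rw [hx] at h
    exact h
  -- triangularity in the c-form
  have htr : ∀ (v : ℤ) (i j : Fin n), j ≤ i →
      c v (r i) (r j) = if j = i then -v else 0 := by
    intro v i j hji
    have hε : (if 0 ≤ v then (1:ℤ) else -1) = 1 ∨ (if 0 ≤ v then (1:ℤ) else -1) = -1 := by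
      split <;> simp
    have h := hr i _ hε j hji
    have hval : ((if 0 ≤ v then (1:ℤ) else -1) • (Pi.single (r i) 1 : Fin n → ℤ)) (r j)
        = if j = i then (if 0 ≤ v then (1:ℤ) else -1) else 0 := by
      simp [Pi.single_apply, r.injective.eq_iff]
    rw [hval] at h
    have hf : f ((if 0 ≤ v then (1:ℤ) else -1) • (Pi.single (r i) 1 : Fin n → ℤ)) (r j)
        = -(if j = i then (if 0 ≤ v then (1:ℤ) else -1) else 0) := by linarith
    simp only [hc, Pi.smul_apply, hf, smul_eq_mul, mul_neg]
    by_cases hji' : j = i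
    · simp only [hji', if_pos rfl]
      simp only [Int.natCast_natAbs]
      rcases le_or_gt 0 v with h | h
      · simp [h, abs_of_nonneg h]
      · simp [not_le.mpr h, abs_of_neg h]
    · simp [hji']
  -- coordinate formula
  have hcoord : ∀ (x : Fin n → ℤ) (j : Fin n),
      f x (r j) = (∑ i ∈ Finset.Iio j, c (x (r i)) (r i) (r j)) - x (r j) := by
    intro x j
    rw [hdec]
    have h1 : (∑ i, c (x i) i) (r j) = ∑ i, c (x i) i (r j) := by
      simp [Finset.sum_apply]
    rw [h1]
    rw [← Equiv.sum_comp r (fun i => c (x i) i (r j))]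
    have h2 : (∑ i, c (x (r i)) (r i) (r j))
        = ∑ i ∈ Finset.Iic j, c (x (r i)) (r i) (r j) := by
      symm
      apply Finset.sum_subset (Finset.subset_univ _)
      intro i _ hi
      rw [Finset.mem_Iic] at hi
      have hji : j < i := lt_of_not_ge hi
      rw [htr _ _ _ hji.le, if_neg hji.ne]
    rw [h2, ← Finset.Iio_insert, Finset.sum_insert (by simp)]
    rw [htr _ _ _ le_rfl, if_pos rfl]
    ring
  constructor
  · -- injective
    intro x y hxy
    have main : ∀ k : ℕ, ∀ j : Fin n, (j : ℕ) < k → x (r j) = y (r j) := by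
      intro k
      induction k with
      | zero => exact fun j hj => absurd hj (by omega)
      | succ k ih =>
        intro j hj
        rcases Nat.lt_or_ge (j : ℕ) k with h | h
        · exact ih j h
        · have h1 := hcoord x j
          have h2 := hcoord y j
          rw [hxy] at h1
          have hsum : (∑ i ∈ Finset.Iio j, c (x (r i)) (r i) (r j))
              = ∑ i ∈ Finset.Iio j, c (y (r i)) (r i) (r j) := by
            apply Finset.sum_congr rfl
            intro i hi
            have : (i : ℕ) < k := by
              have := Finset.mem_Iio.mp hi
              have := Fin.lt_def.mp this
              omega
            rw [ih i this]
          rw [hsum] at h1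
          linarith [h1, h2]
    funext k
    have := main n (r.symm k) (r.symm k).isLt
    simpa using this
  · -- surjective
    intro y
    have main : ∀ k : ℕ, k ≤ n → ∃ x, ∀ j : Fin n, (j : ℕ) < k → f x (r j) = y (r j) := by
      intro k
      induction k with
      | zero => exact fun _ => ⟨0, fun j hj => absurd hj (by omega)⟩
      | succ k ih =>
        intro hk
        obtain ⟨x, hx⟩ := ih (by omega)
        have hkn : k < n := by omega
        set jk : Fin n := ⟨k, hkn⟩ with hjk
        set v : ℤ := (∑ i ∈ Finset.Iio jk, c (x (r i)) (r i) (r jk)) - y (r jk) with hv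
        set x' : Fin n → ℤ := Function.update x (r jk) v with hx'
        have hx'eq : ∀ i : Fin n, i ≠ jk → x' (r i) = x (r i) := by
          intro i hi
          exact Function.update_of_ne (fun h => hi (r.injective h)) _ _
        have hx'k : x' (r jk) = v := Function.update_self _ _ _
        refine ⟨x', ?_⟩
        intro j hj
        rcases Nat.lt_or_ge (j : ℕ) k with h | h
        · have hne : ∀ i : Fin n, i ≤ j → x' (r i) = x (r i) := by
            intro i hij
            apply hx'eq
            intro hcon
            have := Fin.le_def.mp hij
            simp [hcon, hjk] at this
            omega
          rw [hcoord, hne j le_rfl]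
          have hsum : (∑ i ∈ Finset.Iio j, c (x' (r i)) (r i) (r j))
              = ∑ i ∈ Finset.Iio j, c (x (r i)) (r i) (r j) := by
            apply Finset.sum_congr rfl
            intro i hi
            rw [hne i (le_of_lt (Finset.mem_Iio.mp hi))]
          rw [hsum, ← hcoord]
          exact hx j h
        · have hvk : (j : ℕ) = k := by omega
          have hjeq : j = jk := Fin.ext (by simp [hjk, hvk])
          subst hjeq
          rw [hcoord, hx'k]
          have hsum : (∑ i ∈ Finset.Iio jk, c (x' (r i)) (r i) (r jk))
              = ∑ i ∈ Finset.Iio jk, c (x (r i)) (r i) (r jk) := by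
            apply Finset.sum_congr rfl
            intro i hi
            rw [hx'eq i (ne_of_lt (Finset.mem_Iio.mp hi))]
          rw [hsum, hv]
          ring
    obtain ⟨x, hx⟩ := main n le_rfl
    exact ⟨x, funext fun k => by simpa using hx (r.symm k) (r.symm k).isLt⟩
end

section
/- Let a, b, c be positive integers with a ≥ b. In ℚ(x₁,x₂,x₃), define Y = (x₁^c x₂^{a−b} + x₂^a + x₃^c)/(x₁x₃) and z₃ = (x₁^c + x₂^b)/x₃. Then Y·x₁·z₃^{c−1} = x₂^{a−b}z₃^c + (x₁^c + x₂^b)^{c−1}; equivalently, Y = (x₂^{a−b}z₃^c + (x₁^c + x₂^b)^{c−1})/(x₁ z₃^{c−1}), so Y ∈ ℤ[x₁^{±1}, x₂^{±1}, z₃^{±1}]. -/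
set_option maxHeartbeats 1000000
set_option synthInstance.maxHeartbeats 400000


open MvPolynomial

/-- Y·x₁·z₃^{c−1} = x₂^{a−b} z₃^c + (x₁^c + x₂^b)^{c−1}, and hence Y lies in the
Laurent ring ℤ[x₁^{±1}, x₂^{±1}, z₃^{±1}]. -/
theorem stmt_14 (a b c : ℕ) (ha : 0 < a) (hb : 0 < b) (hc : 0 < c) (hba : b ≤ a) :
    let K := FractionRing (MvPolynomial (Fin 3) ℤ)
    let x₁ : K := algebraMap (MvPolynomial (Fin 3) ℤ) K (X 0)
    let x₂ : K := algebraMap (MvPolynomial (Fin 3) ℤ) K (X 1)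
    let x₃ : K := algebraMap (MvPolynomial (Fin 3) ℤ) K (X 2)
    let Y : K := (x₁ ^ c * x₂ ^ (a - b) + x₂ ^ a + x₃ ^ c) / (x₁ * x₃)
    let z₃ : K := (x₁ ^ c + x₂ ^ b) / x₃
    Y * x₁ * z₃ ^ (c - 1) = x₂ ^ (a - b) * z₃ ^ c + (x₁ ^ c + x₂ ^ b) ^ (c - 1) ∧
    Y ∈ Subring.closure ({x₁, x₂, z₃, x₁⁻¹, x₂⁻¹, z₃⁻¹} : Set K) := by
  intro K x₁ x₂ x₃ Y z₃
  have hinj := IsFractionRing.injective (MvPolynomial (Fin 3) ℤ) K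
  have hmap : ∀ p : MvPolynomial (Fin 3) ℤ, p ≠ 0 →
      algebraMap (MvPolynomial (Fin 3) ℤ) K p ≠ 0 := fun p hp =>
    (map_ne_zero_iff _ hinj).mpr hp
  have hx1 : x₁ ≠ 0 := hmap _ (X_ne_zero 0)
  have hx3 : x₃ ≠ 0 := hmap _ (X_ne_zero 2)
  have hs : x₁ ^ c + x₂ ^ b ≠ 0 := by
    have : (X 0 : MvPolynomial (Fin 3) ℤ) ^ c + X 1 ^ b ≠ 0 := by
      intro h
      have := congrArg (eval (fun _ => (1 : ℤ))) h
      simp at this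
    simpa [x₁, x₂, map_add, map_pow] using hmap _ this
  have hz₃ : z₃ ≠ 0 := div_ne_zero hs hx3
  obtain ⟨d, rfl⟩ : ∃ d, c = d + 1 := ⟨c - 1, (Nat.succ_pred_eq_of_pos hc).symm⟩
  obtain ⟨e, rfl⟩ : ∃ e, a = e + b := ⟨a - b, (Nat.sub_add_cancel hba).symm⟩
  have hab : e + b - b = e := by omega
  have hc1 : d + 1 - 1 = d := by omega
  have key : Y * x₁ * z₃ ^ d =
      x₂ ^ e * z₃ ^ (d + 1) + (x₁ ^ (d + 1) + x₂ ^ b) ^ d := by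
    simp only [Y, z₃, hab]
    have gen : ∀ {F : Type} [Field F] (x₁ x₂ x₃ : F), x₁ ≠ 0 → x₃ ≠ 0 →
        (x₁ ^ (d + 1) * x₂ ^ e + x₂ ^ (e + b) + x₃ ^ (d + 1)) / (x₁ * x₃) * x₁ *
          ((x₁ ^ (d + 1) + x₂ ^ b) / x₃) ^ d =
        x₂ ^ e * ((x₁ ^ (d + 1) + x₂ ^ b) / x₃) ^ (d + 1) + (x₁ ^ (d + 1) + x₂ ^ b) ^ d := by
      intro F _ x₁ x₂ x₃ h1 h3
      rw [div_pow, div_pow]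
      field_simp
      ring
    exact gen x₁ x₂ x₃ hx1 hx3
  constructor
  · rw [hc1, hab]; exact key
  · have hY : Y = (x₂ ^ e * z₃ ^ (d + 1) + (x₁ ^ (d + 1) + x₂ ^ b) ^ d)
        * x₁⁻¹ * (z₃⁻¹) ^ d := by
      rw [← key]
      have gen : ∀ {F : Type} [Field F] (y x z : F), x ≠ 0 → z ≠ 0 →
          y = y * x * z ^ d * x⁻¹ * (z⁻¹) ^ d := by
        intro F _ y x z h1 h3
        rw [inv_pow, mul_right_comm (y * x), mul_inv_cancel_right₀ h1, mul_inv_cancel_right₀ (pow_ne_zero d h3)]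
      exact gen Y x₁ z₃ hx1 hz₃
    rw [hY]
    set S := Subring.closure ({x₁, x₂, z₃, x₁⁻¹, x₂⁻¹, z₃⁻¹} : Set K)
    have h1 : x₁ ∈ S := Subring.subset_closure (by simp)
    have h2 : x₂ ∈ S := Subring.subset_closure (by simp)
    have h3 : z₃ ∈ S := Subring.subset_closure (by simp)
    have h4 : x₁⁻¹ ∈ S := Subring.subset_closure (by simp)
    have h6 : z₃⁻¹ ∈ S := Subring.subset_closure (by simp)
    exact S.mul_mem (S.mul_mem (S.add_mem (S.mul_mem (S.pow_mem h2 e) (S.pow_mem h3 (d + 1)))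
      (S.pow_mem (S.add_mem (S.pow_mem h1 (d + 1)) (S.pow_mem h2 b)) d)) h4) (S.pow_mem h6 d)
end

section
/- Let a, b, c be positive integers with a ≥ b. In ℚ(x₁,x₂,x₃), define Y = (x₁^c x₂^{a−b} + x₂^a + x₃^c)/(x₁x₃) and z₁ = (x₂^a + x₃^c)/x₁. Then Y·z₁^{c−1}·x₃ = z₁^c + (x₂^a + x₃^c)^{c−1} x₂^{a−b}; hence Y ∈ ℤ[z₁^{±1}, x₂^{±1}, x₃^{±1}]. -/
set_option maxHeartbeats 1000000
set_option synthInstance.maxHeartbeats 400000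


open MvPolynomial

/-- Y·z₁^{c−1}·x₃ = z₁^c + (x₂^a + x₃^c)^{c−1} x₂^{a−b}, and hence Y lies in
ℤ[z₁^{±1}, x₂^{±1}, x₃^{±1}]. -/
theorem stmt_15 (a b c : ℕ) (ha : 0 < a) (hb : 0 < b) (hc : 0 < c) (hba : b ≤ a) :
    let K := FractionRing (MvPolynomial (Fin 3) ℤ)
    let x₁ : K := algebraMap (MvPolynomial (Fin 3) ℤ) K (X 0)
    let x₂ : K := algebraMap (MvPolynomial (Fin 3) ℤ) K (X 1)
    let x₃ : K := algebraMap (MvPolynomial (Fin 3) ℤ) K (X 2)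
    let Y : K := (x₁ ^ c * x₂ ^ (a - b) + x₂ ^ a + x₃ ^ c) / (x₁ * x₃)
    let z₁ : K := (x₂ ^ a + x₃ ^ c) / x₁
    Y * z₁ ^ (c - 1) * x₃ = z₁ ^ c + (x₂ ^ a + x₃ ^ c) ^ (c - 1) * x₂ ^ (a - b) ∧
    Y ∈ Subring.closure ({z₁, x₂, x₃, z₁⁻¹, x₂⁻¹, x₃⁻¹} : Set K) := by
  intro K x₁ x₂ x₃ Y z₁
  have hinj : Function.Injective (algebraMap (MvPolynomial (Fin 3) ℤ) K) :=
    IsFractionRing.injective _ _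
  have hmap : ∀ p : MvPolynomial (Fin 3) ℤ, p ≠ 0 →
      algebraMap (MvPolynomial (Fin 3) ℤ) K p ≠ 0 := by
    intro p hp
    exact (map_ne_zero_iff _ hinj).mpr hp
  have hx1 : x₁ ≠ 0 := hmap _ (X_ne_zero 0)
  have hx2 : x₂ ≠ 0 := hmap _ (X_ne_zero 1)
  have hx3 : x₃ ≠ 0 := hmap _ (X_ne_zero 2)
  have hSpoly : (X 1 ^ a + X 2 ^ c : MvPolynomial (Fin 3) ℤ) ≠ 0 := by
    intro h
    have := congrArg (coeff (Finsupp.single 1 a)) h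
    rw [coeff_add, coeff_X_pow, coeff_X_pow, coeff_zero] at this
    simp only [if_pos rfl] at this
    have hne : Finsupp.single (2 : Fin 3) c ≠ Finsupp.single (1 : Fin 3) a := by
      intro he
      have := (Finsupp.single_eq_single_iff _ _ _ _).mp he
      rcases this with ⟨h1, h2⟩ | ⟨h1, h2⟩
      · exact absurd h1 (by decide)
      · omega
    rw [if_neg hne] at this
    norm_num at this
  have hS : x₂ ^ a + x₃ ^ c ≠ 0 := by
    have : x₂ ^ a + x₃ ^ c = algebraMap (MvPolynomial (Fin 3) ℤ) K (X 1 ^ a + X 2 ^ c) := by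
      simp [x₂, x₃, map_add, map_pow]
    rw [this]
    exact hmap _ hSpoly
  have hz : z₁ ≠ 0 := div_ne_zero hS hx1
  have hc1 : c - 1 + 1 = c := Nat.succ_pred_eq_of_pos hc
  have key : Y * z₁ ^ (c - 1) * x₃ = z₁ ^ c + (x₂ ^ a + x₃ ^ c) ^ (c - 1) * x₂ ^ (a - b) := by
    have : Y * z₁ ^ (c - 1) * x₃ * x₁ ^ c = (z₁ ^ c + (x₂ ^ a + x₃ ^ c) ^ (c - 1) * x₂ ^ (a - b)) * x₁ ^ c := by
      simp only [Y, z₁, div_pow]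
      rw [← hc1]
      rw [div_mul_div_comm, div_mul_eq_mul_div, div_mul_eq_mul_div,
        div_eq_iff (mul_ne_zero (mul_ne_zero hx1 hx3) (pow_ne_zero _ hx1)),
        div_add' _ _ _ (pow_ne_zero _ hx1), div_mul_cancel₀ _ (pow_ne_zero _ hx1)]
      simp only [Nat.add_sub_cancel]
      ring
    exact mul_right_cancel₀ (pow_ne_zero _ hx1) this
  refine ⟨key, ?_⟩
  have hY : Y = (z₁ ^ c + (x₂ ^ a + x₃ ^ c) ^ (c - 1) * x₂ ^ (a - b)) * (z₁⁻¹) ^ (c - 1) * x₃⁻¹ := by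
    rw [← key]
    rw [inv_pow, mul_right_comm (Y * z₁ ^ (c - 1)) x₃, mul_inv_cancel_right₀ (pow_ne_zero _ hz),
      mul_inv_cancel_right₀ hx3]
  rw [hY]
  have m : ∀ u ∈ ({z₁, x₂, x₃, z₁⁻¹, x₂⁻¹, x₃⁻¹} : Set K),
      u ∈ Subring.closure ({z₁, x₂, x₃, z₁⁻¹, x₂⁻¹, x₃⁻¹} : Set K) := fun u hu =>
    Subring.subset_closure hu
  have hz1 := m z₁ (by simp)
  have hx2' := m x₂ (by simp)
  have hx3' := m x₃ (by simp)
  have hzi := m z₁⁻¹ (by simp)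
  have hx3i := m x₃⁻¹ (by simp)
  exact mul_mem (mul_mem (add_mem (pow_mem hz1 _)
    (mul_mem (pow_mem (add_mem (pow_mem hx2' _) (pow_mem hx3' _)) _) (pow_mem hx2' _)))
    (pow_mem hzi _)) hx3i
end

section
/- Let a₁, a₂ be positive integers with c = min(a₁,a₂), and consider the maximal Dyck path D of type a₁ × a₂ (the lattice path from (0,0) to (a₁,a₂) closest to but not above the diagonal). Then D has exactly c corners (a corner being a horizontal edge immediately followed by a vertical edge). -/
/-- The maximal Dyck path of type a₁ × a₂ has exactly min(a₁,a₂) corners.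
The maximal Dyck path is the lattice path from (0,0) to (a₁,a₂) weakly below the
diagonal and as close to it as possible: its height after x horizontal steps is
⌊x·a₂/a₁⌋, and the (x+1)-st horizontal edge is the horizontal edge of a corner
exactly when ⌊(x+1)·a₂/a₁⌋ > ⌊x·a₂/a₁⌋. -/
theorem stmt_18 (a₁ a₂ : ℕ) (h₁ : 0 < a₁) (h₂ : 0 < a₂) :
    ((Finset.range a₁).filter fun x => x * a₂ / a₁ < (x + 1) * a₂ / a₁).card
      = min a₁ a₂ := by
  rcases le_total a₁ a₂ with h | h
  · rw [min_eq_left h]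
    have : (Finset.range a₁).filter (fun x => x * a₂ / a₁ < (x + 1) * a₂ / a₁)
        = Finset.range a₁ := by
      apply Finset.filter_true_of_mem
      intro x _
      have : x * a₂ / a₁ + 1 ≤ (x + 1) * a₂ / a₁ := by
        calc x * a₂ / a₁ + 1 = (x * a₂ + a₁) / a₁ := (Nat.add_div_right _ h₁).symm
          _ ≤ (x * a₂ + a₂) / a₁ := Nat.div_le_div_right (by omega)
          _ = (x + 1) * a₂ / a₁ := by ring_nf
      omega
    rw [this, Finset.card_range]
  · rw [min_eq_right h]
    have key : ∀ x, x * a₂ / a₁ < (x + 1) * a₂ / a₁ →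
        (x + 1) * a₂ / a₁ = x * a₂ / a₁ + 1 := by
      intro x hx
      have : (x + 1) * a₂ / a₁ ≤ x * a₂ / a₁ + 1 := by
        calc (x + 1) * a₂ / a₁ = (x * a₂ + a₂) / a₁ := by ring_nf
          _ ≤ (x * a₂ + a₁) / a₁ := Nat.div_le_div_right (by omega)
          _ = x * a₂ / a₁ + 1 := Nat.add_div_right _ h₁
      omega
    have mono : Monotone (fun x => x * a₂ / a₁) := by
      intro i j hij
      exact Nat.div_le_div_right (Nat.mul_le_mul_right _ hij)
    have := Finset.sum_range_tsub (f := fun x => x * a₂ / a₁) mono a₁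
    simp only [Nat.zero_mul, Nat.zero_div, Nat.mul_div_cancel_left _ h₁,
      Nat.sub_zero] at this
    calc ((Finset.range a₁).filter fun x => x * a₂ / a₁ < (x + 1) * a₂ / a₁).card
        = ∑ x ∈ Finset.range a₁, ((x + 1) * a₂ / a₁ - x * a₂ / a₁) := by
          rw [Finset.card_filter]
          apply Finset.sum_congr rfl
          intro x _
          by_cases hx : x * a₂ / a₁ < (x + 1) * a₂ / a₁
          · rw [if_pos hx, key x hx]; omega
          · rw [if_neg hx]
            have := mono (Nat.le_succ x)
            simp only [Nat.succ_eq_add_one] at this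
            omega
      _ = a₂ := by
          rw [this]
end

section
/- Let R be a commutative ring and x, x' elements of a domain containing R with x·x' = p + q for fixed nonzero p, q ∈ R. For a ∈ ℤ define z[a] = x^{−a} if a ≤ 0 and z[a] = (x')^a if a > 0. Then for any a, b ∈ ℤ, the product z[a]·z[b] is an R-linear combination of elements z[c] with [c]₊ ≤ [a+b]₊, where [t]₊ = max(t,0). -/
theorem stmt_19_aux {R S : Type*} [CommRing R] [CommRing S] [Algebra R S]
    (x x' : S) (p q : R)
    (hx : x * x' = algebraMap R S p + algebraMap R S q) :
    ∀ m n : ℕ, ∃ (s : Finset ℤ) (u : ℤ → R),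
      (∀ c ∈ s, max c 0 ≤ max ((n : ℤ) - m) 0) ∧
      x ^ m * x' ^ n = ∑ c ∈ s, algebraMap R S (u c) *
        (if c ≤ 0 then x ^ (-c).toNat else x' ^ c.toNat) := by
  intro m
  induction m with
  | zero =>
    intro n
    refine ⟨{(n : ℤ)}, fun _ => 1, ?_, ?_⟩
    · intro c hc
      simp only [Finset.mem_singleton] at hc
      subst hc
      simp
    · simp only [Finset.sum_singleton, map_one, one_mul, pow_zero]
      rcases Nat.eq_zero_or_pos n with h | h
      · subst h; simp
      · rw [if_neg (by exact_mod_cast Nat.not_le.2 h)]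
        simp
  | succ m ih =>
    intro n
    cases n with
    | zero =>
      refine ⟨{-(m + 1 : ℤ)}, fun _ => 1, ?_, ?_⟩
      · intro c hc
        simp only [Finset.mem_singleton] at hc
        subst hc
        omega
      · rw [Finset.sum_singleton, if_pos (by omega)]
        simp only [map_one, one_mul, pow_zero, mul_one, neg_neg]
        norm_num
    | succ n =>
      obtain ⟨s, u, h1, h2⟩ := ih n
      refine ⟨s, fun c => (p + q) * u c, ?_, ?_⟩
      · intro c hc
        have := h1 c hc
        have : ((n : ℤ) - m) = ((n + 1 : ℕ) : ℤ) - ((m + 1 : ℕ) : ℤ) := by push_cast; ring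
        omega
      · have key : x ^ (m + 1) * x' ^ (n + 1) = (x ^ m * x' ^ n) * (x * x') := by ring
        rw [key, hx, h2, Finset.sum_mul]
        refine Finset.sum_congr rfl fun c _ => ?_
        rw [map_mul, map_add]
        ring

/-- Rank-one standard monomials: if x·x' = p + q with p, q ∈ R nonzero, and
z[a] = x^{−a} for a ≤ 0, z[a] = (x')^a for a > 0, then z[a]·z[b] is an R-linear
combination of z[c]'s with [c]₊ ≤ [a+b]₊. -/
theorem stmt_19 (R S : Type*) [CommRing R] [CommRing S] [IsDomain S] [Algebra R S]
    (x x' : S) (p q : R) (hp : p ≠ 0) (hq : q ≠ 0)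
    (hx : x * x' = algebraMap R S p + algebraMap R S q) :
    let z : ℤ → S := fun a => if a ≤ 0 then x ^ (-a).toNat else x' ^ a.toNat
    ∀ a b : ℤ, ∃ (s : Finset ℤ) (u : ℤ → R),
      (∀ c ∈ s, max c 0 ≤ max (a + b) 0) ∧
      z a * z b = ∑ c ∈ s, algebraMap R S (u c) * z c := by
  intro z a b
  by_cases ha : a ≤ 0 <;> by_cases hb : b ≤ 0
  · -- both ≤ 0
    refine ⟨{a + b}, fun _ => 1, ?_, ?_⟩
    · intro c hc; simp only [Finset.mem_singleton] at hc; subst hc; exact le_refl _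
    · simp only [z, Finset.sum_singleton, map_one, one_mul, if_pos ha, if_pos hb,
        if_pos (by omega : a + b ≤ 0)]
      rw [← pow_add]
      congr 1
      omega
  · -- a ≤ 0 < b
    obtain ⟨s, u, h1, h2⟩ := stmt_19_aux x x' p q hx (-a).toNat b.toNat
    refine ⟨s, u, ?_, ?_⟩
    · intro c hc
      have := h1 c hc
      have e1 : ((b.toNat : ℤ)) = b := Int.toNat_of_nonneg (by omega)
      have e2 : (((-a).toNat : ℤ)) = -a := Int.toNat_of_nonneg (by omega)
      rw [e1, e2] at this
      omega
    · simp only [z, if_pos ha, if_neg hb]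
      exact h2
  · -- b ≤ 0 < a
    obtain ⟨s, u, h1, h2⟩ := stmt_19_aux x x' p q hx (-b).toNat a.toNat
    refine ⟨s, u, ?_, ?_⟩
    · intro c hc
      have := h1 c hc
      have e1 : ((a.toNat : ℤ)) = a := Int.toNat_of_nonneg (by omega)
      have e2 : (((-b).toNat : ℤ)) = -b := Int.toNat_of_nonneg (by omega)
      rw [e1, e2] at this
      omega
    · simp only [z, if_pos hb, if_neg ha]
      rw [mul_comm]
      exact h2
  · -- both > 0
    refine ⟨{a + b}, fun _ => 1, ?_, ?_⟩
    · intro c hc; simp only [Finset.mem_singleton] at hc; subst hc; exact le_refl _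
    · simp only [z, Finset.sum_singleton, map_one, one_mul, if_neg ha, if_neg hb,
        if_neg (by omega : ¬ a + b ≤ 0)]
      rw [← pow_add]
      congr 1
      omega
end
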